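/- For every fixed real β with 0 < β < 1, the function α ↦ f^Acc(α,β) is differentiable at every α with 0 < α < min(2β, 2(1-β)), with derivative equal to (1/2)·ln((β - α/2)/(1-α)) + (1/2)·ln((1 - β - α/2)/(1-α)) + ln 2, which equals (1/2)·ln(4x(1-x)) with x = (β - α/2)/(1-α). -/

import Mathlib

/-- Binary entropy function with natural logarithm (`Real.log 0 = 0` gives `H 0 = H 1 = 0`). -/
noncomputable def H (x : ℝ) : ℝ := -x * Real.log x - (1 - x) * Real.log (1 - x)

/-- Asymptotic input-output weight distribution of the rate-1 accumulator. -/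
noncomputable def fAcc (α β : ℝ) : ℝ :=
  (1 - β) * H (α / (2 * (1 - β))) + β * H (α / (2 * β)) - H α

lemma hasDerivAt_H {x : ℝ} (h0 : 0 < x) (h1 : x < 1) :
    HasDerivAt H (Real.log (1 - x) - Real.log x) x := by
  have h1' : (0:ℝ) < 1 - x := by linarith
  have d1 : HasDerivAt (fun y : ℝ => y * Real.log y) (Real.log x + 1) x := by
    have := (hasDerivAt_id x).fun_mul (Real.hasDerivAt_log h0.ne')
    simpa [mul_inv_cancel₀ h0.ne'] using this
  have du : HasDerivAt (fun y : ℝ => 1 - y) (-1) x := by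
    simpa using (hasDerivAt_const x (1:ℝ)).fun_sub (hasDerivAt_id x)
  have dl : HasDerivAt (fun y : ℝ => Real.log (1 - y)) ((1 - x)⁻¹ * (-1)) x :=
    (Real.hasDerivAt_log h1'.ne').comp x du
  have d2 : HasDerivAt (fun y : ℝ => (1 - y) * Real.log (1 - y))
      (-(Real.log (1 - x) + 1)) x := by
    have := du.fun_mul dl
    refine this.congr_deriv ?_
    field_simp
    ring
  have h := d1.fun_neg.fun_sub d2
  rw [show H = fun i => -(i * Real.log i) - (1 - i) * Real.log (1 - i) by
    funext y
    simp only [H]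
    ring]
  exact h.congr_deriv (by ring)

theorem stmt_13 (β : ℝ) (hβ0 : 0 < β) (hβ1 : β < 1)
    (α : ℝ) (hα0 : 0 < α) (hαu : α < min (2 * β) (2 * (1 - β))) :
    HasDerivAt (fun a => fAcc a β)
      ((1 / 2) * Real.log ((β - α / 2) / (1 - α)) +
       (1 / 2) * Real.log ((1 - β - α / 2) / (1 - α)) + Real.log 2) α ∧
    (1 / 2) * Real.log ((β - α / 2) / (1 - α)) +
      (1 / 2) * Real.log ((1 - β - α / 2) / (1 - α)) + Real.log 2 =
    (1 / 2) * Real.log (4 * ((β - α / 2) / (1 - α)) * (1 - (β - α / 2) / (1 - α))) := by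
  have h1β : (0:ℝ) < 1 - β := by linarith
  have hαβ : α < 2 * β := lt_of_lt_of_le hαu (min_le_left _ _)
  have hα1β : α < 2 * (1 - β) := lt_of_lt_of_le hαu (min_le_right _ _)
  have hp : (0:ℝ) < β - α / 2 := by linarith
  have hq : (0:ℝ) < 1 - β - α / 2 := by linarith
  have hr : (0:ℝ) < 1 - α := by linarith
  have hα1 : α < 1 := by linarith
  have hc1 : (0:ℝ) < 2 * (1 - β) := by linarith
  have hc2 : (0:ℝ) < 2 * β := by linarith
  -- log identities
  have l1 : Real.log (1 - α / (2 * (1 - β)))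
      = Real.log (1 - β - α / 2) - Real.log (1 - β) := by
    rw [show 1 - α / (2 * (1 - β)) = (1 - β - α / 2) / (1 - β) by field_simp]
    exact Real.log_div hq.ne' h1β.ne'
  have l2 : Real.log (α / (2 * (1 - β)))
      = Real.log α - (Real.log 2 + Real.log (1 - β)) := by
    rw [Real.log_div hα0.ne' hc1.ne', Real.log_mul two_ne_zero h1β.ne']
  have l3 : Real.log (1 - α / (2 * β)) = Real.log (β - α / 2) - Real.log β := by
    rw [show 1 - α / (2 * β) = (β - α / 2) / β by field_simp]
    exact Real.log_div hp.ne' hβ0.ne'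
  have l4 : Real.log (α / (2 * β)) = Real.log α - (Real.log 2 + Real.log β) := by
    rw [Real.log_div hα0.ne' hc2.ne', Real.log_mul two_ne_zero hβ0.ne']
  have t1 : Real.log ((β - α / 2) / (1 - α))
      = Real.log (β - α / 2) - Real.log (1 - α) := Real.log_div hp.ne' hr.ne'
  have t2 : Real.log ((1 - β - α / 2) / (1 - α))
      = Real.log (1 - β - α / 2) - Real.log (1 - α) := Real.log_div hq.ne' hr.ne'
  constructor
  · -- derivative
    have dc1 : HasDerivAt (fun a : ℝ => a / (2 * (1 - β))) (1 / (2 * (1 - β))) α := by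
      simpa using (hasDerivAt_id α).div_const (2 * (1 - β))
    have dc2 : HasDerivAt (fun a : ℝ => a / (2 * β)) (1 / (2 * β)) α := by
      simpa using (hasDerivAt_id α).div_const (2 * β)
    have hx1 : 0 < α / (2 * (1 - β)) := div_pos hα0 hc1
    have hx1' : α / (2 * (1 - β)) < 1 := (div_lt_one hc1).mpr hα1β
    have hx2 : 0 < α / (2 * β) := div_pos hα0 hc2
    have hx2' : α / (2 * β) < 1 := (div_lt_one hc2).mpr hαβ
    have dH1 := (hasDerivAt_H hx1 hx1').comp α dc1
    have dH2 := (hasDerivAt_H hx2 hx2').comp α dc2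
    have dHα := hasDerivAt_H hα0 hα1
    have h := ((dH1.const_mul (1 - β)).fun_add (dH2.const_mul β)).fun_sub dHα
    have hfun : (fun a => fAcc a β)
        = fun a : ℝ => (1 - β) * H (a / (2 * (1 - β))) + β * H (a / (2 * β)) - H a := by
      funext a; rfl
    rw [hfun]
    refine h.congr_deriv ?_
    rw [l1, l2, l3, l4, t1, t2]
    field_simp
    ring
  · -- algebraic identity
    have hx : 1 - (β - α / 2) / (1 - α) = (1 - β - α / 2) / (1 - α) := by
      field_simp; ring
    rw [hx, t1, t2,
      show (4:ℝ) * ((β - α / 2) / (1 - α)) * ((1 - β - α / 2) / (1 - α))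
        = ((β - α / 2) / (1 - α)) * ((1 - β - α / 2) / (1 - α)) * (2 * 2) by ring,
      Real.log_mul (by positivity) (by positivity),
      Real.log_mul (by positivity) (by positivity),
      Real.log_mul two_ne_zero two_ne_zero, t1, t2]
    ring
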